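/- Let I and V be Polish spaces with their Borel σ-algebras, λ a Borel probability measure on I, and A : I → Set V a correspondence whose graph {(i,a) ∈ I × V : a ∈ A(i)} is closed in I × V (so each A(i) is closed). Let (η_n)_{n∈ℕ} be Borel probability measures on V converging weakly to a Borel probability measure η, and suppose each η_n disintegrates with respect to (A_i)_{i∈I} and λ, i.e. there are Markov kernels κ_n from I to V with κ_n(i)(A(i)) = 1 for λ-a.e. i and η_n = λ.bind κ_n. Then η also disintegrates with respect to (A_i)_{i∈I} and λ: there exists a Markov kernel κ from I to V with κ(i)(A(i)) = 1 for λ-a.e. i and η = λ.bind κ. -/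

import Mathlib

open MeasureTheory ProbabilityTheory BoundedContinuousFunction
open scoped ENNReal Topology

namespace DisintegrationWeakLimitAux

/-- Limits along an ultrafilter exist in `ℝ≥0∞`. -/
lemma exists_ulim (𝒰 : Ultrafilter ℕ) (f : ℕ → ℝ≥0∞) :
    ∃ x, Filter.Tendsto f (𝒰 : Filter ℕ) (nhds x) := by
  obtain ⟨x, -, hx⟩ := isCompact_univ.ultrafilter_le_nhds (𝒰.map f)
    (by simp [Filter.le_principal_iff])
  exact ⟨x, by rwa [Ultrafilter.coe_map] at hx⟩

/-- Uniform tightness from uniform finite ball covers. -/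
lemma exists_tight {W : Type*} [MetricSpace W] [CompleteSpace W]
    [MeasurableSpace W] [OpensMeasurableSpace W]
    (ρ : ℕ → Measure W) (hρ : ∀ n, IsProbabilityMeasure (ρ n))
    (h : ∀ r : ℝ, 0 < r → ∀ e : ℝ≥0∞, 0 < e →
      ∃ t : Set W, t.Finite ∧ ∀ n, 1 - e ≤ ρ n (⋃ x ∈ t, Metric.ball x r))
    {e : ℝ≥0∞} (he : 0 < e) :
    ∃ K : Set W, IsCompact K ∧ ∀ n, ρ n Kᶜ ≤ e := by
  have hpos : ∀ k : ℕ, (0 : ℝ≥0∞) < e * 2⁻¹ ^ (k + 1) := by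
    intro k
    refine ENNReal.mul_pos he.ne' ?_
    exact pow_ne_zero _ (by simp)
  have hrad : ∀ k : ℕ, (0 : ℝ) < 1 / ((k : ℝ) + 1) := by intro k; positivity
  choose t ht hmeas using fun k : ℕ =>
    h (1 / ((k : ℝ) + 1)) (hrad k) (e * 2⁻¹ ^ (k + 1)) (hpos k)
  set U : ℕ → Set W := fun k => ⋃ x ∈ t k, Metric.ball x (1 / ((k : ℝ) + 1)) with hU
  set S : Set W := ⋂ k, U k with hS
  refine ⟨closure S, ?_, ?_⟩
  · refine TotallyBounded.isCompact_of_isClosed ?_ isClosed_closure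
    refine TotallyBounded.closure ?_
    rw [Metric.totallyBounded_iff]
    intro ε hε
    obtain ⟨k, hk⟩ := exists_nat_one_div_lt (K := ℝ) hε
    refine ⟨t k, ht k, ?_⟩
    refine (Set.iInter_subset _ k).trans ?_
    exact Set.iUnion₂_mono fun x _ => Metric.ball_subset_ball hk.le
  · intro n
    have h1 : ρ n (closure S)ᶜ ≤ ρ n Sᶜ :=
      measure_mono (Set.compl_subset_compl.2 subset_closure)
    have h2 : Sᶜ = ⋃ k, (U k)ᶜ := by rw [hS, Set.compl_iInter]
    have h3 : ∀ k, ρ n (U k)ᶜ ≤ e * 2⁻¹ ^ (k + 1) := by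
      intro k
      have hUopen : IsOpen (U k) := isOpen_biUnion fun x _ => Metric.isOpen_ball
      haveI := hρ n
      rw [prob_compl_eq_one_sub hUopen.measurableSet]
      calc 1 - ρ n (U k) ≤ 1 - (1 - e * 2⁻¹ ^ (k + 1)) := tsub_le_tsub_left (hmeas k n) 1
        _ ≤ e * 2⁻¹ ^ (k + 1) := tsub_tsub_le
    calc ρ n (closure S)ᶜ ≤ ρ n Sᶜ := h1
      _ ≤ ∑' k, ρ n (U k)ᶜ := by rw [h2]; exact measure_iUnion_le _
      _ ≤ ∑' k, e * 2⁻¹ ^ (k + 1) := ENNReal.tsum_le_tsum h3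
      _ = e * ∑' k, 2⁻¹ ^ (k + 1) := ENNReal.tsum_mul_left
      _ = e := by
          rw [ENNReal.tsum_geometric_add_one, ENNReal.one_sub_inv_two, inv_inv,
            ENNReal.inv_mul_cancel two_ne_zero ENNReal.ofNat_ne_top, mul_one]

/-- Two probability measures on a metrizable Borel space comparing by `≤` on closed sets
are equal. -/
lemma measure_eq_of_le_closed {W : Type*} [MeasurableSpace W] [TopologicalSpace W]
    [BorelSpace W] [TopologicalSpace.PseudoMetrizableSpace W]
    (μ ν : Measure W) [IsProbabilityMeasure μ] [IsProbabilityMeasure ν]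
    (h : ∀ C : Set W, IsClosed C → μ C ≤ ν C) : μ = ν := by
  have hopen : ∀ U : Set W, IsOpen U → ν U ≤ μ U := by
    intro U hU
    have h1 : μ Uᶜ ≤ ν Uᶜ := h _ hU.isClosed_compl
    have e1 : μ Uᶜᶜ = 1 - μ Uᶜ := prob_compl_eq_one_sub hU.measurableSet.compl
    have e2 : ν Uᶜᶜ = 1 - ν Uᶜ := prob_compl_eq_one_sub hU.measurableSet.compl
    rw [compl_compl] at e1 e2
    rw [e1, e2]
    exact tsub_le_tsub_left h1 1
  have hclosed : ∀ C : Set W, IsClosed C → ν C ≤ μ C := by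
    intro C hC
    rw [Set.measure_eq_iInf_isOpen C μ, Set.measure_eq_iInf_isOpen C ν]
    refine le_iInf fun U => le_iInf fun hCU => le_iInf fun hUo => ?_
    exact iInf_le_of_le U (iInf_le_of_le hCU (iInf_le_of_le hUo (hopen U hUo)))
  refine MeasureTheory.ext_of_generate_finite {s : Set W | IsClosed s} ?_ ?_ ?_ ?_
  · rw [BorelSpace.measurable_eq (α := W), borel_eq_generateFrom_isClosed]
  · exact fun s hs t ht _ => hs.inter ht
  · exact fun s hs => le_antisymm (h s hs) (hclosed s hs)
  · simp

end DisintegrationWeakLimitAux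

open DisintegrationWeakLimitAux TopologicalSpace

/-- Stability of disintegration under weak limits: if each `η_n` disintegrates over the
closed-graph correspondence `(A_i)` via a Markov kernel, and `η_n → η` weakly, then `η`
also disintegrates over `(A_i)`. -/
theorem disintegration_stable_under_weak_limit
    {I V : Type*}
    [TopologicalSpace I] [PolishSpace I] [MeasurableSpace I] [BorelSpace I]
    [TopologicalSpace V] [PolishSpace V] [MeasurableSpace V] [BorelSpace V]
    (lam : Measure I) [IsProbabilityMeasure lam]
    (A : I → Set V)
    (hgraph : IsClosed {p : I × V | p.2 ∈ A p.1})
    (ηs : ℕ → Measure V) [∀ n, IsProbabilityMeasure (ηs n)]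
    (η : Measure V) [IsProbabilityMeasure η]
    (κs : ℕ → ProbabilityTheory.Kernel I V) [∀ n, ProbabilityTheory.IsMarkovKernel (κs n)]
    (hκA : ∀ n, ∀ᵐ i ∂lam, (κs n) i (A i) = 1)
    (hbind : ∀ n, ηs n = lam.bind (fun i => (κs n) i))
    (hweak : ∀ f : BoundedContinuousFunction V ℝ,
      Filter.Tendsto (fun n => ∫ a, f a ∂(ηs n)) Filter.atTop (nhds (∫ a, f a ∂η))) :
    ∃ κ : ProbabilityTheory.Kernel I V, ProbabilityTheory.IsMarkovKernel κ ∧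
      (∀ᵐ i ∂lam, κ i (A i) = 1) ∧ η = lam.bind (fun i => κ i) := by
  classical
  -- nonemptiness
  have hneI : Nonempty I := by
    by_contra h
    rw [not_nonempty_iff] at h
    have h1 := measure_univ (μ := lam)
    rw [Set.univ_eq_empty_iff.2 h, measure_empty] at h1
    exact zero_ne_one h1
  have hneV : Nonempty V := by
    by_contra h
    rw [not_nonempty_iff] at h
    have h1 := measure_univ (μ := η)
    rw [Set.univ_eq_empty_iff.2 h, measure_empty] at h1
    exact zero_ne_one h1
  letI := upgradeIsCompletelyMetrizable I
  letI := upgradeIsCompletelyMetrizable V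
  set G : Set (I × V) := {p : I × V | p.2 ∈ A p.1} with hGdef
  have hGm : MeasurableSet G := hgraph.measurableSet
  set μn : ℕ → Measure (I × V) := fun n => lam ⊗ₘ κs n with hμndef
  haveI instμn : ∀ n, IsProbabilityMeasure (μn n) := fun n =>
    ⟨by rw [show μn n = lam ⊗ₘ κs n from rfl, Measure.compProd_apply_univ]; exact measure_univ⟩
  have hfstS : ∀ n (S : Set I), MeasurableSet S → μn n (S ×ˢ Set.univ) = lam S := by
    intro n S hS
    rw [show μn n = lam ⊗ₘ κs n from rfl,
      Measure.compProd_apply_prod hS MeasurableSet.univ]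
    simp [measure_univ]
  have hsndS : ∀ n (S : Set V), MeasurableSet S → μn n (Set.univ ×ˢ S) = ηs n S := by
    intro n S hS
    rw [show μn n = lam ⊗ₘ κs n from rfl,
      Measure.compProd_apply_prod MeasurableSet.univ hS, Measure.restrict_univ,
      hbind n, Measure.bind_apply hS (Kernel.measurable (κs n)).aemeasurable]
  have hGn : ∀ n, μn n G = 1 := by
    intro n
    rw [show μn n = lam ⊗ₘ κs n from rfl, Measure.compProd_apply hGm]
    have hae : ∀ᵐ i ∂lam, (κs n) i (Prod.mk i ⁻¹' G) = 1 := by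
      filter_upwards [hκA n] with i hi
      exact hi
    rw [lintegral_congr_ae hae, lintegral_one, measure_univ]
  -- weak convergence as ProbabilityMeasure
  set ηP : ℕ → ProbabilityMeasure V := fun n => ⟨ηs n, inferInstance⟩ with hηPdef
  set ηL : ProbabilityMeasure V := ⟨η, inferInstance⟩ with hηLdef
  have hconv : Filter.Tendsto ηP Filter.atTop (nhds ηL) := by
    rw [ProbabilityMeasure.tendsto_iff_forall_integral_tendsto]
    intro f
    exact hweak f
  -- uniform finite ball covers for (ηs n) and for lam
  obtain ⟨uI, huI⟩ := TopologicalSpace.exists_dense_seq I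
  obtain ⟨uV, huV⟩ := TopologicalSpace.exists_dense_seq V
  have htI : ∀ r : ℝ, 0 < r → ∀ e : ℝ≥0∞, 0 < e →
      ∃ t : Set I, t.Finite ∧ ∀ _n : ℕ, 1 - e ≤ lam (⋃ x ∈ t, Metric.ball x r) := by
    intro r hr e hepos
    set Wm : ℕ → Set I := fun m => ⋃ j ∈ Set.Iio m, Metric.ball (uI j) r with hWmdef
    have hWmono : Monotone Wm := fun a b hab =>
      Set.biUnion_subset_biUnion_left (Set.Iio_subset_Iio hab)
    have hWuniv : (⋃ m, Wm m) = Set.univ := by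
      rw [Set.eq_univ_iff_forall]
      intro x
      obtain ⟨j, hj⟩ := Metric.denseRange_iff.1 huI x r hr
      refine Set.mem_iUnion.2 ⟨j + 1, ?_⟩
      rw [hWmdef]
      exact Set.mem_biUnion (Set.mem_Iio.2 (Nat.lt_succ_self j))
        (by rw [Metric.mem_ball]; exact hj)
    have hlim : Filter.Tendsto (fun m => lam (Wm m)) Filter.atTop (nhds 1) := by
      have h0 := tendsto_measure_iUnion_atTop (μ := lam) hWmono
      rwa [hWuniv, measure_univ] at h0
    have hlt : (1 : ℝ≥0∞) - e < 1 := ENNReal.sub_lt_self ENNReal.one_ne_top one_ne_zero hepos.ne'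
    obtain ⟨m₀, hm₀⟩ := (hlim.eventually (eventually_gt_nhds hlt)).exists
    refine ⟨uI '' Set.Iio m₀, (Set.finite_Iio m₀).image _, fun _ => ?_⟩
    rw [Set.biUnion_image]
    exact hm₀.le
  have htV : ∀ r : ℝ, 0 < r → ∀ e : ℝ≥0∞, 0 < e →
      ∃ t : Set V, t.Finite ∧ ∀ n, 1 - e ≤ ηs n (⋃ x ∈ t, Metric.ball x r) := by
    intro r hr e hepos
    set Wm : ℕ → Set V := fun m => ⋃ j ∈ Set.Iio m, Metric.ball (uV j) r with hWmdef
    have hWopen : ∀ m, IsOpen (Wm m) := fun m => isOpen_biUnion fun _ _ => Metric.isOpen_ball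
    have hWmono : Monotone Wm := fun a b hab =>
      Set.biUnion_subset_biUnion_left (Set.Iio_subset_Iio hab)
    have hWuniv : (⋃ m, Wm m) = Set.univ := by
      rw [Set.eq_univ_iff_forall]
      intro x
      obtain ⟨j, hj⟩ := Metric.denseRange_iff.1 huV x r hr
      refine Set.mem_iUnion.2 ⟨j + 1, ?_⟩
      rw [hWmdef]
      exact Set.mem_biUnion (Set.mem_Iio.2 (Nat.lt_succ_self j))
        (by rw [Metric.mem_ball]; exact hj)
    have hlim : ∀ ρ : Measure V, IsProbabilityMeasure ρ →
        Filter.Tendsto (fun m => ρ (Wm m)) Filter.atTop (nhds 1) := by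
      intro ρ hρ
      have h0 := tendsto_measure_iUnion_atTop (μ := ρ) hWmono
      rwa [hWuniv, measure_univ] at h0
    have hlt : (1 : ℝ≥0∞) - e < 1 := ENNReal.sub_lt_self ENNReal.one_ne_top one_ne_zero hepos.ne'
    obtain ⟨m₀, hm₀⟩ := ((hlim η inferInstance).eventually (eventually_gt_nhds hlt)).exists
    have hliminf : (ηL : Measure V) (Wm m₀) ≤
        Filter.atTop.liminf fun n => (ηP n : Measure V) (Wm m₀) :=
      ProbabilityMeasure.le_liminf_measure_open_of_tendsto hconv (hWopen m₀)
    have hev : ∀ᶠ n in Filter.atTop, 1 - e < (ηP n : Measure V) (Wm m₀) :=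
      Filter.eventually_lt_of_lt_liminf (lt_of_lt_of_le hm₀ hliminf)
    obtain ⟨N, hN⟩ := Filter.eventually_atTop.1 hev
    have hsmall : ∀ n, ∃ m, 1 - e < ηs n (Wm m) := fun n =>
      ((hlim (ηs n) inferInstance).eventually (eventually_gt_nhds hlt)).exists
    choose g hg using hsmall
    set M : ℕ := max m₀ ((Finset.range N).sup g) with hMdef
    refine ⟨uV '' Set.Iio M, (Set.finite_Iio M).image _, fun n => ?_⟩
    rw [Set.biUnion_image]
    rcases le_or_gt N n with hn | hn
    · exact le_of_lt (lt_of_lt_of_le (hN n hn) (measure_mono (hWmono (le_max_left _ _))))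
    · have hgn : g n ≤ M :=
        le_trans (Finset.le_sup (Finset.mem_range.2 hn)) (le_max_right _ _)
      exact le_of_lt (lt_of_lt_of_le (hg n) (measure_mono (hWmono hgn)))
  have htightI : ∀ e : ℝ≥0∞, 0 < e → ∃ K : Set I, IsCompact K ∧ lam Kᶜ ≤ e := by
    intro e he
    obtain ⟨K, h1, h2⟩ := exists_tight (fun _ : ℕ => lam) (fun _ => inferInstance) htI he
    exact ⟨K, h1, h2 0⟩
  have htightV : ∀ e : ℝ≥0∞, 0 < e → ∃ K : Set V, IsCompact K ∧ ∀ n, ηs n Kᶜ ≤ e :=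
    fun e he => exists_tight ηs (fun _ => inferInstance) htV he
  have htight : ∀ e : ℝ≥0∞, 0 < e →
      ∃ K : Set (I × V), IsCompact K ∧ ∀ n, 1 - e ≤ μn n K := by
    intro e he
    have he2 : (0 : ℝ≥0∞) < e / 2 := ENNReal.div_pos he.ne' ENNReal.ofNat_ne_top
    obtain ⟨KI, hKIc, hKI⟩ := htightI _ he2
    obtain ⟨KV, hKVc, hKV⟩ := htightV _ he2
    refine ⟨KI ×ˢ KV, hKIc.prod hKVc, fun n => ?_⟩
    have hm : MeasurableSet (KI ×ˢ KV) :=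
      hKIc.isClosed.measurableSet.prod hKVc.isClosed.measurableSet
    have hcompl : μn n (KI ×ˢ KV)ᶜ ≤ e := by
      rw [Set.compl_prod_eq_union]
      calc μn n (KIᶜ ×ˢ Set.univ ∪ Set.univ ×ˢ KVᶜ)
          ≤ μn n (KIᶜ ×ˢ Set.univ) + μn n (Set.univ ×ˢ KVᶜ) := measure_union_le _ _
        _ = lam KIᶜ + ηs n KVᶜ := by
            rw [hfstS n _ hKIc.isClosed.measurableSet.compl,
              hsndS n _ hKVc.isClosed.measurableSet.compl]
        _ ≤ e / 2 + e / 2 := add_le_add hKI (hKV n)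
        _ = e := ENNReal.add_halves e
    rw [prob_compl_eq_one_sub hm] at hcompl
    exact tsub_le_iff_left.2 (tsub_le_iff_right.1 hcompl)
  -- the ultrafilter limit set function
  set 𝒰 : Ultrafilter ℕ := Ultrafilter.of Filter.atTop with h𝒰def
  have h𝒰le : (𝒰 : Filter ℕ) ≤ Filter.atTop := Ultrafilter.of_le _
  choose β hβ using fun S : Set (I × V) => exists_ulim 𝒰 (fun n => μn n S)
  have hβmono : ∀ {S T : Set (I × V)}, S ⊆ T → β S ≤ β T := fun {S T} h =>
    le_of_tendsto_of_tendsto' (hβ S) (hβ T) fun n => measure_mono h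
  have hβconst : ∀ {S : Set (I × V)} {c : ℝ≥0∞}, (∀ n, μn n S = c) → β S = c :=
    fun {S c} h => tendsto_nhds_unique (hβ S) (by simp only [h]; exact tendsto_const_nhds)
  have hβuniv : β Set.univ = 1 := hβconst fun n => measure_univ
  have hβGc : β Gᶜ = 0 := hβconst fun n => by
    rw [prob_compl_eq_one_sub hGm, hGn n, tsub_self]
  have hβge : ∀ {c : ℝ≥0∞} {S : Set (I × V)}, (∀ n, c ≤ μn n S) → c ≤ β S :=
    fun {c S} h => ge_of_tendsto (hβ S) (Filter.Eventually.of_forall h)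
  have hβadd : ∀ {S T : Set (I × V)}, Disjoint S T → MeasurableSet T →
      β (S ∪ T) = β S + β T := by
    intro S T hd hTm
    refine tendsto_nhds_unique (hβ _) ?_
    have h0 : ∀ n, μn n (S ∪ T) = μn n S + μn n T := fun n => measure_union hd hTm
    simp only [h0]
    exact (hβ S).add (hβ T)
  have hβsub : ∀ S T : Set (I × V), β (S ∪ T) ≤ β S + β T := fun S T =>
    le_of_tendsto_of_tendsto' (hβ _) ((hβ S).add (hβ T)) fun n => measure_union_le _ _
  -- inner-regularized content
  set Btil : Set (I × V) → ℝ≥0∞ :=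
    fun U => ⨆ K : {K : Compacts (I × V) // (K : Set (I × V)) ⊆ U}, β (K : Set (I × V)) with
    hBtildef
  have hBne : ∀ U : Set (I × V), Nonempty {K : Compacts (I × V) // (K : Set (I × V)) ⊆ U} :=
    fun U => ⟨⟨⊥, by simp⟩⟩
  have hBtil_le_β : ∀ U, Btil U ≤ β U := fun U => iSup_le fun K => hβmono K.2
  have hle_Btil : ∀ (K : Compacts (I × V)) {U : Set (I × V)}, (K : Set (I × V)) ⊆ U →
      β (K : Set (I × V)) ≤ Btil U := fun K {U} hKU =>
    le_iSup (fun K' : {K' : Compacts (I × V) // (K' : Set (I × V)) ⊆ U} =>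
      β (K' : Set (I × V))) ⟨K, hKU⟩
  set γ : Compacts (I × V) → ℝ≥0∞ :=
    fun K => ⨅ (U : Set (I × V)) (_ : IsOpen U) (_ : (K : Set (I × V)) ⊆ U), Btil U with hγdef
  have hγ_le : ∀ (K : Compacts (I × V)) {U : Set (I × V)}, IsOpen U →
      (K : Set (I × V)) ⊆ U → γ K ≤ Btil U :=
    fun K {U} hUo hKU => iInf_le_of_le U (iInf_le_of_le hUo (iInf_le _ hKU))
  have hγ_le_one : ∀ K, γ K ≤ 1 := fun K =>
    (hγ_le K isOpen_univ (Set.subset_univ _)).trans ((hBtil_le_β _).trans hβuniv.le)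
  have hγ_ne_top : ∀ K, γ K ≠ ∞ := fun K =>
    ((hγ_le_one K).trans_lt ENNReal.one_lt_top).ne
  have hβ_le_γ : ∀ K : Compacts (I × V), β (K : Set (I × V)) ≤ γ K :=
    fun K => le_iInf fun U => le_iInf fun hUo => le_iInf fun hKU => hle_Btil K hKU
  have hγmono : ∀ K₁ K₂ : Compacts (I × V), (K₁ : Set (I × V)) ⊆ K₂ → γ K₁ ≤ γ K₂ :=
    fun K₁ K₂ h => le_iInf fun U => le_iInf fun hUo => le_iInf fun hKU =>
      hγ_le K₁ hUo (h.trans hKU)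
  have hγ_exists : ∀ (K : Compacts (I × V)) (ε : ℝ≥0∞), 0 < ε →
      ∃ U : Set (I × V), IsOpen U ∧ (K : Set (I × V)) ⊆ U ∧ Btil U ≤ γ K + ε := by
    intro K ε hε
    by_contra hcon
    push_neg at hcon
    have h0 : γ K + ε ≤ γ K :=
      le_iInf fun U => le_iInf fun hUo => le_iInf fun hKU => (hcon U hUo hKU).le
    exact (ENNReal.lt_add_right (hγ_ne_top K) hε.ne').not_ge h0
  have hBtil_union : ∀ U₁ U₂ : Set (I × V), IsOpen U₁ → IsOpen U₂ →
      Btil (U₁ ∪ U₂) ≤ Btil U₁ + Btil U₂ := by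
    intro U₁ U₂ h1 h2
    refine iSup_le fun K => ?_
    obtain ⟨L₁, L₂, hL₁, hL₂, hL₁U, hL₂U, hKeq⟩ :=
      K.1.isCompact.binary_compact_cover h1 h2 K.2
    calc β (K.1 : Set (I × V)) = β (L₁ ∪ L₂) := by rw [← hKeq]
      _ ≤ β L₁ + β L₂ := hβsub _ _
      _ ≤ Btil U₁ + Btil U₂ :=
          add_le_add (hle_Btil ⟨L₁, hL₁⟩ hL₁U) (hle_Btil ⟨L₂, hL₂⟩ hL₂U)
  have hγ_sup_le : ∀ K₁ K₂ : Compacts (I × V), γ (K₁ ⊔ K₂) ≤ γ K₁ + γ K₂ := by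
    intro K₁ K₂
    refine ENNReal.le_of_forall_pos_le_add fun ε hε _ => ?_
    have hε2 : (0 : ℝ≥0∞) < ε / 2 := by
      refine ENNReal.div_pos ?_ ENNReal.ofNat_ne_top
      exact_mod_cast hε.ne'
    obtain ⟨U₁, hU₁o, hKU₁, hB₁⟩ := hγ_exists K₁ _ hε2
    obtain ⟨U₂, hU₂o, hKU₂, hB₂⟩ := hγ_exists K₂ _ hε2
    calc γ (K₁ ⊔ K₂) ≤ Btil (U₁ ∪ U₂) := by
          refine hγ_le _ (hU₁o.union hU₂o) ?_
          rw [Compacts.coe_sup]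
          exact Set.union_subset_union hKU₁ hKU₂
      _ ≤ Btil U₁ + Btil U₂ := hBtil_union _ _ hU₁o hU₂o
      _ ≤ (γ K₁ + ε / 2) + (γ K₂ + ε / 2) := add_le_add hB₁ hB₂
      _ = γ K₁ + γ K₂ + ε := by
          rw [add_add_add_comm, ENNReal.add_halves]
  have hγ_sup_ge : ∀ K₁ K₂ : Compacts (I × V), Disjoint (K₁ : Set (I × V)) K₂ →
      γ K₁ + γ K₂ ≤ γ (K₁ ⊔ K₂) := by
    intro K₁ K₂ hdis
    obtain ⟨O₁, O₂, hO₁, hO₂, hKO₁, hKO₂, hOdis⟩ :=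
      SeparatedNhds.of_isCompact_isCompact K₁.isCompact K₂.isCompact hdis
    refine le_iInf fun U => le_iInf fun hUo => le_iInf fun hKU => ?_
    rw [Compacts.coe_sup] at hKU
    have hKU₁ : (K₁ : Set (I × V)) ⊆ U ∩ O₁ :=
      Set.subset_inter (Set.subset_union_left.trans hKU) hKO₁
    have hKU₂ : (K₂ : Set (I × V)) ⊆ U ∩ O₂ :=
      Set.subset_inter (Set.subset_union_right.trans hKU) hKO₂
    refine le_trans (add_le_add (hγ_le _ (hUo.inter hO₁) hKU₁)
      (hγ_le _ (hUo.inter hO₂) hKU₂)) ?_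
    haveI := hBne (U ∩ O₁)
    haveI := hBne (U ∩ O₂)
    rw [hBtildef]
    rw [ENNReal.iSup_add]
    refine iSup_le fun L₁ => ?_
    rw [ENNReal.add_iSup]
    refine iSup_le fun L₂ => ?_
    have hdisL : Disjoint (L₁.1 : Set (I × V)) (L₂.1 : Set (I × V)) :=
      hOdis.mono (L₁.2.trans Set.inter_subset_right) (L₂.2.trans Set.inter_subset_right)
    have hadd : β ((L₁.1 : Set (I × V)) ∪ (L₂.1 : Set (I × V)))
        = β (L₁.1 : Set (I × V)) + β (L₂.1 : Set (I × V)) :=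
      hβadd hdisL L₂.1.isCompact.isClosed.measurableSet
    rw [← hadd]
    refine le_trans (hβmono (le_refl _)) ?_
    have hsub : ((L₁.1 ⊔ L₂.1 : Compacts (I × V)) : Set (I × V)) ⊆ U := by
      rw [Compacts.coe_sup]
      exact Set.union_subset (L₁.2.trans Set.inter_subset_left)
        (L₂.2.trans Set.inter_subset_left)
    have := hle_Btil (L₁.1 ⊔ L₂.1) hsub
    rwa [Compacts.coe_sup] at this
  set c : MeasureTheory.Content (I × V) :=
    { toFun := fun K => (γ K).toNNReal
      mono' := fun K₁ K₂ h => ENNReal.toNNReal_mono (hγ_ne_top K₂) (hγmono K₁ K₂ h)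
      sup_disjoint' := by
        intro K₁ K₂ hdis _ _
        show (γ (K₁ ⊔ K₂)).toNNReal = (γ K₁).toNNReal + (γ K₂).toNNReal
        have heq : γ (K₁ ⊔ K₂) = γ K₁ + γ K₂ :=
          le_antisymm (hγ_sup_le K₁ K₂) (hγ_sup_ge K₁ K₂ hdis)
        rw [heq, ENNReal.toNNReal_add (hγ_ne_top K₁) (hγ_ne_top K₂)]
      sup_le' := by
        intro K₁ K₂
        show (γ (K₁ ⊔ K₂)).toNNReal ≤ (γ K₁).toNNReal + (γ K₂).toNNReal
        have h0 := ENNReal.toNNReal_mono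
          (by exact ENNReal.add_ne_top.2 ⟨hγ_ne_top K₁, hγ_ne_top K₂⟩) (hγ_sup_le K₁ K₂)
        rwa [ENNReal.toNNReal_add (hγ_ne_top K₁) (hγ_ne_top K₂)] at h0 } with hcdef
  have hc_coe : ∀ K : Compacts (I × V), (c K : ℝ≥0∞) = γ K := fun K =>
    ENNReal.coe_toNNReal (hγ_ne_top K)
  set ν : Measure (I × V) := c.measure with hνdef
  have hν_eq_inner : ∀ (U : Set (I × V)) (hUo : IsOpen U),
      ν U = c.innerContent ⟨U, hUo⟩ := by
    intro U hUo
    rw [hνdef, MeasureTheory.Content.measure_apply c hUo.measurableSet,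
      c.outerMeasure_of_isOpen U hUo]
  have hν_le_β : ∀ {U : Set (I × V)}, IsOpen U → ν U ≤ β U := by
    intro U hUo
    rw [hν_eq_inner U hUo]
    refine iSup₂_le fun K hKU => ?_
    rw [hc_coe K]
    exact (hγ_le K hUo hKU).trans (hBtil_le_β U)
  have hν_inner_ge : ∀ {U : Set (I × V)}, IsOpen U → ∀ K : Compacts (I × V),
      (K : Set (I × V)) ⊆ U → β (K : Set (I × V)) ≤ ν U := by
    intro U hUo K hKU
    rw [hν_eq_inner U hUo]
    refine le_trans ?_ (c.le_innerContent K ⟨U, hUo⟩ hKU)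
    rw [hc_coe K]
    exact hβ_le_γ K
  have hν_univ : ν Set.univ = 1 := by
    refine le_antisymm ((hν_le_β isOpen_univ).trans hβuniv.le) ?_
    refine ENNReal.le_of_forall_pos_le_add fun ε hε _ => ?_
    have hεpos : (0 : ℝ≥0∞) < ε := by exact_mod_cast hε
    obtain ⟨K, hKc, hK⟩ := htight ε hεpos
    have h1 : 1 - (ε : ℝ≥0∞) ≤ β K := hβge hK
    have h2 : β K ≤ ν Set.univ := hν_inner_ge isOpen_univ ⟨K, hKc⟩ (Set.subset_univ _)
    calc (1 : ℝ≥0∞) ≤ (1 - ε) + ε := le_tsub_add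
      _ ≤ ν Set.univ + ε := add_le_add_left (h1.trans h2) _
  haveI hνprob : IsProbabilityMeasure ν := ⟨hν_univ⟩
  have hνGc : ν Gᶜ = 0 :=
    le_antisymm ((hν_le_β hgraph.isOpen_compl).trans hβGc.le) zero_le
  have hfst_le : ∀ C : Set I, IsClosed C → ν (Prod.fst ⁻¹' C) ≤ lam C := by
    intro C hC
    have key : ∀ δ : ℝ, 0 < δ → ν (Prod.fst ⁻¹' C) ≤ lam (Metric.thickening δ C) := by
      intro δ hδ
      have hsub : Prod.fst ⁻¹' C ⊆ Metric.thickening δ C ×ˢ (Set.univ : Set V) :=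
        fun p hp => Set.mem_prod.2 ⟨Metric.self_subset_thickening hδ C hp, Set.mem_univ _⟩
      calc ν (Prod.fst ⁻¹' C) ≤ ν (Metric.thickening δ C ×ˢ Set.univ) := measure_mono hsub
        _ ≤ β (Metric.thickening δ C ×ˢ Set.univ) :=
            hν_le_β (Metric.isOpen_thickening.prod isOpen_univ)
        _ = lam (Metric.thickening δ C) :=
            hβconst fun n => hfstS n _ Metric.isOpen_thickening.measurableSet
    have hto : Filter.Tendsto (fun δ : ℝ => lam (Metric.thickening δ C))
        (nhdsWithin 0 (Set.Ioi 0)) (nhds (lam C)) :=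
      tendsto_measure_thickening_of_isClosed ⟨1, one_pos, measure_ne_top lam _⟩ hC
    exact ge_of_tendsto hto (eventually_nhdsWithin_of_forall key)
  have hsnd_le : ∀ C : Set V, IsClosed C → ν (Prod.snd ⁻¹' C) ≤ η C := by
    intro C hC
    have key : ∀ δ : ℝ, 0 < δ → ν (Prod.snd ⁻¹' C) ≤ η (Metric.cthickening δ C) := by
      intro δ hδ
      have hsub : Prod.snd ⁻¹' C ⊆ (Set.univ : Set I) ×ˢ Metric.thickening δ C :=
        fun p hp => Set.mem_prod.2 ⟨Set.mem_univ _, Metric.self_subset_thickening hδ C hp⟩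
      have h1 : ν (Prod.snd ⁻¹' C) ≤ β (Set.univ ×ˢ Metric.thickening δ C) :=
        (measure_mono hsub).trans (hν_le_β (isOpen_univ.prod Metric.isOpen_thickening))
      have h2 : Filter.Tendsto (fun n => ηs n (Metric.thickening δ C)) (𝒰 : Filter ℕ)
          (nhds (β (Set.univ ×ˢ Metric.thickening δ C))) :=
        (hβ _).congr fun n => hsndS n _ Metric.isOpen_thickening.measurableSet
      have h3 : β (Set.univ ×ˢ Metric.thickening δ C) ≤
          Filter.atTop.limsup fun n => ηs n (Metric.thickening δ C) := by
        rw [← h2.limsup_eq]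
        exact Filter.limsup_le_limsup_of_le h𝒰le
      have h4 : (Filter.atTop.limsup fun n => ηs n (Metric.thickening δ C)) ≤
          Filter.atTop.limsup fun n => ηs n (Metric.cthickening δ C) :=
        Filter.limsup_le_limsup (Filter.Eventually.of_forall fun n =>
          measure_mono (Metric.thickening_subset_cthickening δ C))
      have h5 : (Filter.atTop.limsup fun n => (ηP n : Measure V) (Metric.cthickening δ C)) ≤
          (ηL : Measure V) (Metric.cthickening δ C) :=
        ProbabilityMeasure.limsup_measure_closed_le_of_tendsto hconv
          (Metric.isClosed_cthickening)
      exact h1.trans (h3.trans (h4.trans h5))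
    have hto : Filter.Tendsto (fun δ : ℝ => η (Metric.cthickening δ C))
        (nhdsWithin 0 (Set.Ioi 0)) (nhds (η C)) :=
      (tendsto_measure_cthickening_of_isClosed ⟨1, one_pos, measure_ne_top η _⟩
        hC).mono_left nhdsWithin_le_nhds
    exact ge_of_tendsto hto (eventually_nhdsWithin_of_forall key)
  haveI : IsProbabilityMeasure ν.fst := by
    constructor
    rw [Measure.fst_univ]
    exact hν_univ
  haveI : IsProbabilityMeasure ν.snd := by
    constructor
    rw [Measure.snd_univ]
    exact hν_univ
  have hfst : ν.fst = lam := by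
    refine measure_eq_of_le_closed _ _ fun C hC => ?_
    rw [Measure.fst_apply hC.measurableSet]
    exact hfst_le C hC
  have hsnd : ν.snd = η := by
    refine measure_eq_of_le_closed _ _ fun C hC => ?_
    rw [Measure.snd_apply hC.measurableSet]
    exact hsnd_le C hC
  have hdisint : lam ⊗ₘ ν.condKernel = ν := by
    conv_rhs => rw [← ν.disintegrate ν.condKernel]
    rw [hfst]
  refine ⟨ν.condKernel, inferInstance, ?_, ?_⟩
  · have h0 : (lam ⊗ₘ ν.condKernel) Gᶜ = 0 := by rw [hdisint]; exact hνGc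
    rw [Measure.compProd_apply hGm.compl] at h0
    have hmeasfun : Measurable fun i => ν.condKernel i (Prod.mk i ⁻¹' Gᶜ) :=
      Kernel.measurable_kernel_prodMk_left hGm.compl
    rw [lintegral_eq_zero_iff hmeasfun] at h0
    filter_upwards [h0] with i hi
    have hAi : MeasurableSet (A i) := by
      have h6 : MeasurableSet (Prod.mk i ⁻¹' G) := hGm.preimage measurable_prodMk_left
      exact h6
    have hcompl : ν.condKernel i ((A i)ᶜ) = 0 := hi
    haveI : IsProbabilityMeasure (ν.condKernel i) := IsMarkovKernel.isProbabilityMeasure i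
    exact (prob_compl_eq_zero_iff hAi).1 hcompl
  · ext s hs
    rw [Measure.bind_apply hs (Kernel.measurable _).aemeasurable]
    have h7 : η s = ν (Prod.snd ⁻¹' s) := by rw [← hsnd, Measure.snd_apply hs]
    have h8 : ν (Prod.snd ⁻¹' s) = ∫⁻ a, ν.condKernel a s ∂lam := by
      conv_lhs => rw [← hdisint]
      rw [← Set.univ_prod, Measure.compProd_apply_prod MeasurableSet.univ hs,
        Measure.restrict_univ]
    rw [h7, h8]
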